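/- Let t_{i-1} < t_i be times in a stream of points x_1,…,x_n ∈ [Δ]^d with OPT(X_{t_i}) ≤ 2·OPT(X_{t_{i-1}}), where OPT(X_t) is the optimal (k,z)-clustering cost of the first t points. Let K be an optimal set of k centers for X_{t_i} and π the assignment of points to nearest centers in K. Then for every t ∈ (t_{i-1}, t_i] and every set C of k centers, dist(x_t,C)^z / Σ_{j=1}^t dist(x_j,C)^z ≤ 2^z · dist(x_t,π(x_t))^z / Σ_{j=1}^t dist(x_j,π(x_j))^z + 3·2^{2z-1} / |S_t|, where S_t = {x_j : j ≤ t, π(x_j) = π(x_t)}. -/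

import Mathlib

open scoped BigOperators Classical

/-- Distance from a point to a finite set of centers. -/
noncomputable def distToSet {d : ℕ} (x : EuclideanSpace ℝ (Fin d))
    (C : Finset (EuclideanSpace ℝ (Fin d))) : ℝ :=
  sInf ((fun c => dist x c) '' (C : Set (EuclideanSpace ℝ (Fin d))))

/-- Cost of a single point with respect to a center set: `dist(x,C)^z`. -/
noncomputable def cost1 {d : ℕ} (z : ℝ) (x : EuclideanSpace ℝ (Fin d))
    (C : Finset (EuclideanSpace ℝ (Fin d))) : ℝ :=
  distToSet x C ^ z

lemma add_rpow_le_two_rpow (a b p : ℝ) (ha : 0 ≤ a) (hb : 0 ≤ b) (hp : 1 ≤ p) :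
    (a + b) ^ p ≤ 2 ^ (p - 1) * (a ^ p + b ^ p) := by
  lift a to NNReal using ha
  lift b to NNReal using hb
  exact_mod_cast NNReal.rpow_add_le_mul_rpow_add_rpow a b hp

lemma distToSet_nonneg' {d : ℕ} (x : EuclideanSpace ℝ (Fin d))
    (C : Finset (EuclideanSpace ℝ (Fin d))) : 0 ≤ distToSet x C :=
  Real.sInf_nonneg (by rintro r ⟨c, _, rfl⟩; exact dist_nonneg)

lemma cost1_nonneg' {d : ℕ} (z : ℝ) (x : EuclideanSpace ℝ (Fin d))
    (C : Finset (EuclideanSpace ℝ (Fin d))) : 0 ≤ cost1 z x C :=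
  Real.rpow_nonneg (distToSet_nonneg' x C) z

lemma distToSet_le' {d : ℕ} (x : EuclideanSpace ℝ (Fin d))
    {C : Finset (EuclideanSpace ℝ (Fin d))} {c} (hc : c ∈ C) :
    distToSet x C ≤ dist x c :=
  csInf_le ⟨0, by rintro r ⟨c', _, rfl⟩; exact dist_nonneg⟩ ⟨c, hc, rfl⟩

lemma exists_distToSet' {d : ℕ} (x : EuclideanSpace ℝ (Fin d))
    {C : Finset (EuclideanSpace ℝ (Fin d))} (hC : C.Nonempty) :
    ∃ c ∈ C, distToSet x C = dist x c := by
  have hfin : ((fun c => dist x c) '' (C : Set (EuclideanSpace ℝ (Fin d)))).Finite :=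
    C.finite_toSet.image _
  have hne : ((fun c => dist x c) '' (C : Set (EuclideanSpace ℝ (Fin d)))).Nonempty :=
    ⟨_, ⟨hC.choose, hC.choose_spec, rfl⟩⟩
  obtain ⟨c, hc, h⟩ := hne.csInf_mem hfin
  exact ⟨c, hc, h.symm⟩

theorem online_sens_block_bound (d k n : ℕ) (z : ℝ) (hz : 1 ≤ z)
    (x : ℕ → EuclideanSpace ℝ (Fin d)) (t₀ t₁ : ℕ) (ht : t₀ < t₁) (ht₁ : t₁ ≤ n)
    (OPT : ℕ → ℝ)
    (hOPT : ∀ t, IsGLB {r : ℝ | ∃ C : Finset (EuclideanSpace ℝ (Fin d)),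
      C.Nonempty ∧ C.card = k ∧ r = ∑ j ∈ Finset.Icc 1 t, cost1 z (x j) C} (OPT t))
    (hdouble : OPT t₁ ≤ 2 * OPT t₀)
    (K : Finset (EuclideanSpace ℝ (Fin d))) (hKcard : K.card = k) (hKne : K.Nonempty)
    (hKopt : ∑ j ∈ Finset.Icc 1 t₁, cost1 z (x j) K = OPT t₁)
    (π : EuclideanSpace ℝ (Fin d) → EuclideanSpace ℝ (Fin d))
    (hπ : ∀ p, π p ∈ K ∧ dist p (π p) = distToSet p K)
    (t : ℕ) (ht0 : t₀ < t) (htt : t ≤ t₁)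
    (C : Finset (EuclideanSpace ℝ (Fin d))) (hCne : C.Nonempty) (hCcard : C.card = k)
    (hden1 : 0 < ∑ j ∈ Finset.Icc 1 t, cost1 z (x j) C)
    (hden2 : 0 < ∑ j ∈ Finset.Icc 1 t, dist (x j) (π (x j)) ^ z) :
    cost1 z (x t) C / (∑ j ∈ Finset.Icc 1 t, cost1 z (x j) C) ≤
      2 ^ z * dist (x t) (π (x t)) ^ z / (∑ j ∈ Finset.Icc 1 t, dist (x j) (π (x j)) ^ z) +
      3 * 2 ^ (2 * z - 1) /
        (((Finset.Icc 1 t).filter (fun j => π (x j) = π (x t))).card : ℝ) := by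
  have hz0 : (0:ℝ) ≤ z := le_trans zero_le_one hz
  set A := ∑ j ∈ Finset.Icc 1 t, cost1 z (x j) C with hA
  set B := ∑ j ∈ Finset.Icc 1 t, dist (x j) (π (x j)) ^ z with hB
  set S := (Finset.Icc 1 t).filter (fun j => π (x j) = π (x t)) with hS
  set P : ℝ := 2 ^ (z - 1) with hP
  have hPpos : 0 < P := Real.rpow_pos_of_pos two_pos _
  have h2z : (2:ℝ) ^ z = 2 * P := by
    rw [hP, show z = (z - 1) + 1 by ring, Real.rpow_add two_pos, Real.rpow_one]; ring
  have h2z1 : (2:ℝ) ^ (2 * z - 1) = 2 * P * P := by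
    rw [hP, show 2 * z - 1 = (z - 1) + ((z - 1) + 1) by ring, Real.rpow_add two_pos,
      Real.rpow_add two_pos, Real.rpow_one]; ring
  -- membership of t in S, positivity of card
  have ht1 : 1 ≤ t := by omega
  have htS : t ∈ S := Finset.mem_filter.mpr ⟨Finset.mem_Icc.mpr ⟨ht1, le_refl t⟩, rfl⟩
  have hs1 : (1:ℝ) ≤ (S.card : ℝ) := by
    have : 0 < S.card := Finset.card_pos.mpr ⟨t, htS⟩
    exact_mod_cast this
  have hs0 : (0:ℝ) < (S.card : ℝ) := lt_of_lt_of_le one_pos hs1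
  -- Step 1 : B ≤ 2 * A
  have hBK : B = ∑ j ∈ Finset.Icc 1 t, cost1 z (x j) K :=
    Finset.sum_congr rfl (fun j _ => by rw [cost1, (hπ (x j)).2])
  have hB2A : B ≤ 2 * A := by
    have h1 : B ≤ ∑ j ∈ Finset.Icc 1 t₁, cost1 z (x j) K := by
      rw [hBK]
      exact Finset.sum_le_sum_of_subset_of_nonneg
        (Finset.Icc_subset_Icc_right htt) (fun j _ _ => cost1_nonneg' z (x j) K)
    have h2 : OPT t₀ ≤ ∑ j ∈ Finset.Icc 1 t₀, cost1 z (x j) C :=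
      (hOPT t₀).1 ⟨C, hCne, hCcard, rfl⟩
    have h3 : ∑ j ∈ Finset.Icc 1 t₀, cost1 z (x j) C ≤ A :=
      Finset.sum_le_sum_of_subset_of_nonneg
        (Finset.Icc_subset_Icc_right (le_of_lt ht0)) (fun j _ _ => cost1_nonneg' z (x j) C)
    rw [hKopt] at h1
    linarith
  -- Step 2 : card S * E^z ≤ P * (B + A)  where E = distToSet (π (x t)) C
  set E : ℝ := distToSet (π (x t)) C with hE
  have hEnn : 0 ≤ E := distToSet_nonneg' _ _
  have key : ∀ j ∈ S, E ^ z ≤ P * (dist (x j) (π (x j)) ^ z + cost1 z (x j) C) := by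
    intro j hj
    obtain ⟨hjI, hjπ⟩ := Finset.mem_filter.mp hj
    obtain ⟨q, hq, hq2⟩ := exists_distToSet' (x j) hCne
    have h1 : E ≤ dist (x j) (π (x j)) + distToSet (x j) C := by
      calc E ≤ dist (π (x t)) q := distToSet_le' _ hq
        _ ≤ dist (π (x t)) (x j) + dist (x j) q := dist_triangle _ _ _
        _ = dist (x j) (π (x j)) + distToSet (x j) C := by rw [dist_comm, hjπ, hq2]
    calc E ^ z ≤ (dist (x j) (π (x j)) + distToSet (x j) C) ^ z :=
          Real.rpow_le_rpow hEnn h1 hz0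
      _ ≤ P * (dist (x j) (π (x j)) ^ z + distToSet (x j) C ^ z) :=
          add_rpow_le_two_rpow _ _ _ dist_nonneg (distToSet_nonneg' _ _) hz
      _ = P * (dist (x j) (π (x j)) ^ z + cost1 z (x j) C) := rfl
  have hsE : (S.card : ℝ) * E ^ z ≤ P * (B + A) := by
    have h1 : ∑ _j ∈ S, E ^ z ≤ ∑ j ∈ S, P * (dist (x j) (π (x j)) ^ z + cost1 z (x j) C) :=
      Finset.sum_le_sum key
    rw [Finset.sum_const, nsmul_eq_mul] at h1
    have h2 : ∑ j ∈ S, (dist (x j) (π (x j)) ^ z + cost1 z (x j) C) ≤ B + A := by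
      rw [Finset.sum_add_distrib]
      have hBs : ∑ j ∈ S, dist (x j) (π (x j)) ^ z ≤ B :=
        Finset.sum_le_sum_of_subset_of_nonneg (Finset.filter_subset _ _)
          (fun j _ _ => Real.rpow_nonneg dist_nonneg z)
      have hAs : ∑ j ∈ S, cost1 z (x j) C ≤ A :=
        Finset.sum_le_sum_of_subset_of_nonneg (Finset.filter_subset _ _)
          (fun j _ _ => cost1_nonneg' z (x j) C)
      linarith
    calc (S.card : ℝ) * E ^ z ≤ ∑ j ∈ S, P * (dist (x j) (π (x j)) ^ z + cost1 z (x j) C) := h1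
      _ = P * ∑ j ∈ S, (dist (x j) (π (x j)) ^ z + cost1 z (x j) C) := by
          rw [Finset.mul_sum]
      _ ≤ P * (B + A) := by
          exact mul_le_mul_of_nonneg_left h2 hPpos.le
  -- Step 3 : cost1 z (x t) C ≤ P * (D + E^z)
  set D : ℝ := dist (x t) (π (x t)) ^ z with hD
  have hDnn : 0 ≤ D := Real.rpow_nonneg dist_nonneg z
  have hEznn : 0 ≤ E ^ z := Real.rpow_nonneg hEnn z
  have hcost : cost1 z (x t) C ≤ P * (D + E ^ z) := by
    obtain ⟨q, hq, hq2⟩ := exists_distToSet' (π (x t)) hCne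
    have h1 : distToSet (x t) C ≤ dist (x t) (π (x t)) + E := by
      calc distToSet (x t) C ≤ dist (x t) q := distToSet_le' _ hq
        _ ≤ dist (x t) (π (x t)) + dist (π (x t)) q := dist_triangle _ _ _
        _ = dist (x t) (π (x t)) + E := by rw [hE, hq2]
    calc cost1 z (x t) C ≤ (dist (x t) (π (x t)) + E) ^ z :=
          Real.rpow_le_rpow (distToSet_nonneg' _ _) h1 hz0
      _ ≤ P * (dist (x t) (π (x t)) ^ z + E ^ z) :=
          add_rpow_le_two_rpow _ _ _ dist_nonneg hEnn hz
      _ = P * (D + E ^ z) := rfl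
  -- Final arithmetic
  have k0 : cost1 z (x t) C / A ≤ P * D / A + P * E ^ z / A := by
    rw [← add_div, div_le_div_iff₀ hden1 hden1]
    nlinarith [hcost, hden1]
  have k1 : P * D / A ≤ 2 * P * D / B := by
    rw [div_le_div_iff₀ hden1 hden2]
    nlinarith [mul_nonneg hPpos.le hDnn, hB2A]
  have k2 : P * E ^ z / A ≤ 3 * (2 * P * P) / (S.card : ℝ) := by
    rw [div_le_div_iff₀ hden1 hs0]
    nlinarith [mul_le_mul_of_nonneg_left hsE hPpos.le,
      mul_le_mul_of_nonneg_left hB2A (mul_nonneg hPpos.le hPpos.le), hden1,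
      mul_pos hPpos hPpos]
  rw [h2z, h2z1]
  linarith [k0, k1, k2]
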